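/- (Example 1, maximum of f) Let δ ∈ (0, 1/2) and define f(ν) = 1/|log(1 − 2δ/(1+ν))| + 1/|log(1 − 2δ/(1−ν))| for ν ∈ (−1+2δ, 1−2δ). Then for every ν in this interval, f(ν) ≤ f(0) = 2/|log(1−2δ)|. -/

import Mathlib

open Real Set

private lemma stmt9_log_key {p d : ℝ} (hd : 0 ≤ d) (hdp : d < p) :
    2 * d / p ≤ Real.log (p + d) - Real.log (p - d) := by
  have hp : 0 < p := lt_of_le_of_lt hd hdp
  set g : ℝ → ℝ := fun x => Real.log (p + x) - Real.log (p - x) - 2 * x / p with hg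
  have hmono : MonotoneOn g (Icc 0 d) := by
    apply monotoneOn_of_hasDerivWithinAt_nonneg (f' := fun x => 1/(p+x) + 1/(p-x) - 2/p)
      (convex_Icc 0 d)
    · apply ContinuousOn.sub
      apply ContinuousOn.sub
      · exact (continuousOn_const.add continuousOn_id).log fun x hx =>
          ne_of_gt (by have := hx.1; simp only [Pi.add_apply, Pi.sub_apply, id]; linarith)
      · exact (continuousOn_const.sub continuousOn_id).log fun x hx =>
          ne_of_gt (by have := hx.2; simp only [Pi.add_apply, Pi.sub_apply, id]; linarith)
      · exact (continuousOn_const.mul continuousOn_id).div_const p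
    · intro x hx
      rw [interior_Icc] at hx
      have hx1 : (0:ℝ) < p + x := by linarith [hx.1]
      have hx2 : (0:ℝ) < p - x := by linarith [hx.2]
      have h1 : HasDerivAt (fun x : ℝ => Real.log (p + x)) (1/(p+x)) x := by
        have : HasDerivAt (fun x : ℝ => p + x) 1 x := (hasDerivAt_id x).const_add p
        simpa [one_div] using this.log (ne_of_gt hx1)
      have h2 : HasDerivAt (fun x : ℝ => Real.log (p - x)) (-(1/(p-x))) x := by
        have : HasDerivAt (fun x : ℝ => p - x) (-1) x := (hasDerivAt_id x).const_sub p
        have := this.log (ne_of_gt hx2)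
        convert this using 1
        field_simp
      have h3 : HasDerivAt (fun x : ℝ => 2 * x / p) (2/p) x := by
        have : HasDerivAt (fun x : ℝ => 2 * x) 2 x := by
          simpa using (hasDerivAt_id x).const_mul 2
        simpa using this.div_const p
      have := (h1.sub h2).sub h3
      have heq : 1/(p+x) - -(1/(p-x)) - 2/p = 1/(p+x) + 1/(p-x) - 2/p := by ring
      rw [heq] at this
      exact this.hasDerivWithinAt
    · intro x hx
      rw [interior_Icc] at hx
      have hx1 : (0:ℝ) < p + x := by linarith [hx.1]
      have hx2 : (0:ℝ) < p - x := by linarith [hx.2]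
      rw [div_add_div _ _ (ne_of_gt hx1) (ne_of_gt hx2), sub_nonneg, div_le_div_iff₀ hp
        (by positivity)]
      nlinarith [sq_nonneg x, hx.1.le]
  have h0 : g 0 ≤ g d := hmono (by constructor <;> simp [hd]) (by simp [hd]) hd
  simp only [hg] at h0
  simp only [add_zero, sub_zero, mul_zero, zero_div] at h0
  linarith

private lemma stmt9_hasDerivAt_A {δ ν : ℝ} (h2 : 0 < 1 + ν - 2*δ) (h1 : 0 < 1 + ν) :
    HasDerivAt (fun ν : ℝ => Real.log (1+ν) - Real.log (1+ν-2*δ))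
      (1/(1+ν) - 1/(1+ν-2*δ)) ν := by
  have d1 : HasDerivAt (fun ν : ℝ => Real.log (1+ν)) (1/(1+ν)) ν := by
    have : HasDerivAt (fun ν : ℝ => 1 + ν) 1 ν := (hasDerivAt_id ν).const_add 1
    simpa [one_div] using this.log (ne_of_gt h1)
  have d2 : HasDerivAt (fun ν : ℝ => Real.log (1+ν-2*δ)) (1/(1+ν-2*δ)) ν := by
    have : HasDerivAt (fun ν : ℝ => 1 + ν - 2*δ) 1 ν :=
      ((hasDerivAt_id ν).const_add 1).sub_const (2*δ)
    simpa [one_div] using this.log (ne_of_gt h2)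
  exact d1.sub d2

private lemma stmt9_A_pos {δ : ℝ} (hδ0 : 0 < δ) {ν : ℝ} (h2 : 0 < 1 + ν - 2*δ) :
    0 < Real.log (1+ν) - Real.log (1+ν-2*δ) := by
  have : (1:ℝ) + ν - 2*δ < 1 + ν := by linarith
  have := Real.log_lt_log h2 this
  linarith

/-- `H ν = (1+ν)(1+ν-2δ) A(ν)²` is monotone on the interval. -/

private lemma stmt9_H_mono {δ : ℝ} (hδ0 : 0 < δ) (hδ1 : δ < 1/2) :
    MonotoneOn (fun ν : ℝ => (1+ν)*(1+ν-2*δ) *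
        (Real.log (1+ν) - Real.log (1+ν-2*δ))^2)
      (Ioo (-1 + 2*δ) (1 - 2*δ)) := by
  set A : ℝ → ℝ := fun ν => Real.log (1+ν) - Real.log (1+ν-2*δ) with hA
  apply monotoneOn_of_hasDerivWithinAt_nonneg
    (f' := fun ν => (2+2*ν-2*δ) * (A ν)^2 + (1+ν)*(1+ν-2*δ) * (2 * A ν * (1/(1+ν) - 1/(1+ν-2*δ))))
    (convex_Ioo _ _)
  · -- continuity
    apply ContinuousOn.mul
    · exact (continuousOn_const.add continuousOn_id).mul
        ((continuousOn_const.add continuousOn_id).sub continuousOn_const)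
    · apply ContinuousOn.pow
      apply ContinuousOn.sub
      · exact (continuousOn_const.add continuousOn_id).log fun x hx =>
          ne_of_gt (by have := hx.1; simp only [Pi.add_apply, Pi.sub_apply, id]; linarith)
      · exact ((continuousOn_const.add continuousOn_id).sub continuousOn_const).log fun x hx =>
          ne_of_gt (by have := hx.1; simp only [Pi.add_apply, Pi.sub_apply, id]; linarith)
  · intro ν hν
    rw [interior_Ioo] at hν
    have h2 : 0 < 1 + ν - 2*δ := by linarith [hν.1]
    have h1 : 0 < 1 + ν := by linarith
    have dA := stmt9_hasDerivAt_A (δ := δ) h2 h1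
    have dU : HasDerivAt (fun ν : ℝ => (1+ν)*(1+ν-2*δ)) (2+2*ν-2*δ) ν := by
      have u1 : HasDerivAt (fun ν : ℝ => 1 + ν) 1 ν := (hasDerivAt_id ν).const_add 1
      have u2 : HasDerivAt (fun ν : ℝ => 1 + ν - 2*δ) 1 ν := u1.sub_const (2*δ)
      have : HasDerivAt (fun ν : ℝ => (1+ν)*(1+ν-2*δ)) _ ν := u1.mul u2
      convert this using 1
      ring
    have dA2 : HasDerivAt (fun ν : ℝ => (A ν)^2) (2 * A ν * (1/(1+ν) - 1/(1+ν-2*δ))) ν := by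
      have : HasDerivAt (fun ν : ℝ => (A ν)^2) _ ν := dA.pow 2
      convert this using 1
      ring
    exact (dU.mul dA2).hasDerivWithinAt
  · intro ν hν
    rw [interior_Ioo] at hν
    have h2 : 0 < 1 + ν - 2*δ := by linarith [hν.1]
    have h1 : 0 < 1 + ν := by linarith
    have hApos := stmt9_A_pos hδ0 (ν := ν) h2
    -- (1+ν)(1+ν-2δ)(1/(1+ν) - 1/(1+ν-2δ)) = -2δ
    have hkey : (1+ν)*(1+ν-2*δ) * (1/(1+ν) - 1/(1+ν-2*δ)) = -(2*δ) := by
      field_simp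
      ring
    have hexpr : (2+2*ν-2*δ) * (A ν)^2 + (1+ν)*(1+ν-2*δ) *
        (2 * A ν * (1/(1+ν) - 1/(1+ν-2*δ)))
        = A ν * ((2+2*ν-2*δ) * A ν - 4*δ) := by
      have : (1+ν)*(1+ν-2*δ) * (2 * A ν * (1/(1+ν) - 1/(1+ν-2*δ)))
          = 2 * A ν * ((1+ν)*(1+ν-2*δ) * (1/(1+ν) - 1/(1+ν-2*δ))) := by ring
      rw [this, hkey]
      ring
    rw [hexpr]
    -- A ν ≥ 2δ/(1+ν-δ) by log_key with p = 1+ν-δ, d = δ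
    have hp : δ < 1 + ν - δ := by linarith
    have hK := stmt9_log_key hδ0.le hp
    have hps : (1 + ν - δ) + δ = 1 + ν := by ring
    have hms : (1 + ν - δ) - δ = 1 + ν - 2*δ := by ring
    rw [hps, hms] at hK
    have hppos : 0 < 1 + ν - δ := by linarith
    have hAlb : 2*δ/(1+ν-δ) ≤ A ν := hK
    have h4 : 4*δ ≤ (2+2*ν-2*δ) * A ν := by
      have : (2+2*ν-2*δ) * (2*δ/(1+ν-δ)) ≤ (2+2*ν-2*δ) * A ν :=
        mul_le_mul_of_nonneg_left hAlb (by linarith)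
      have he : (2+2*ν-2*δ) * (2*δ/(1+ν-δ)) = 4*δ := by
        field_simp
        ring
      linarith [he ▸ this]
    have : 0 ≤ (2+2*ν-2*δ) * A ν - 4*δ := by linarith
    positivity

private lemma stmt9_tangent {δ : ℝ} (hδ0 : 0 < δ) (hδ1 : δ < 1/2) {ν : ℝ}
    (hν : ν ∈ Ioo (-1 + 2*δ) (1 - 2*δ)) :
    1/(Real.log (1+ν) - Real.log (1+ν-2*δ)) ≤
      1/(Real.log 1 - Real.log (1-2*δ))
        + (2*δ/((1+(0:ℝ))*(1+(0:ℝ)-2*δ)*(Real.log (1+(0:ℝ)) - Real.log (1+(0:ℝ)-2*δ))^2)) * ν := by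
  set A : ℝ → ℝ := fun ν => Real.log (1+ν) - Real.log (1+ν-2*δ) with hA
  set H : ℝ → ℝ := fun ν => (1+ν)*(1+ν-2*δ) * (A ν)^2 with hH
  set k : ℝ := 2*δ/(H 0) with hk
  set D : ℝ → ℝ := fun x => 1/(A 0) + k*x - 1/(A x) with hD
  have hI0 : (0:ℝ) ∈ Ioo (-1 + 2*δ) (1 - 2*δ) := by constructor <;> simp <;> linarith
  have hmem : ∀ x : ℝ, x ∈ Ioo (-1 + 2*δ) (1 - 2*δ) →
      0 < 1 + x - 2*δ ∧ 0 < 1 + x := fun x hx => ⟨by linarith [hx.1], by linarith [hx.1]⟩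
  have hApos : ∀ x ∈ Ioo (-1 + 2*δ) (1 - 2*δ), 0 < A x := fun x hx =>
    stmt9_A_pos hδ0 (hmem x hx).1
  have hHpos : ∀ x ∈ Ioo (-1 + 2*δ) (1 - 2*δ), 0 < H x := by
    intro x hx
    have := hApos x hx
    have h1 := (hmem x hx).1
    have h2 := (hmem x hx).2
    positivity
  -- D has derivative k - 2δ/H x  at each point of the interval
  have hDderiv : ∀ x ∈ Ioo (-1 + 2*δ) (1 - 2*δ), HasDerivAt D (k - 2*δ/(H x)) x := by
    intro x hx
    obtain ⟨h2, h1⟩ := hmem x hx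
    have hAx := hApos x hx
    have dA := stmt9_hasDerivAt_A (δ := δ) h2 h1
    have dInv : HasDerivAt (fun y => 1/(A y))
        (-(1/(1+x) - 1/(1+x-2*δ)) / (A x)^2) x := by
      have h := (dA.inv (ne_of_gt hAx) : HasDerivAt (fun y => (A y)⁻¹) _ x)
      simp only [one_div] at h ⊢
      exact h
    have dLin : HasDerivAt (fun y : ℝ => 1/(A 0) + k*y) k x := by
      simpa using ((hasDerivAt_id x).const_mul k).const_add (1/(A 0))
    have hkey : -(1/(1+x) - 1/(1+x-2*δ)) / (A x)^2 = 2*δ/(H x) := by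
      rw [hH]
      field_simp
      ring
    rw [hkey] at dInv
    exact dLin.sub dInv
  have hcont : ContinuousOn D (Ioo (-1 + 2*δ) (1 - 2*δ)) := fun x hx =>
    ((hDderiv x hx).continuousAt).continuousWithinAt
  have hD0 : D 0 = 0 := by simp [hD]
  -- case split on sign of ν
  have hIsub : ∀ a b : ℝ, a ∈ Ioo (-1 + 2*δ) (1 - 2*δ) → b ∈ Ioo (-1 + 2*δ) (1 - 2*δ) →
      Icc a b ⊆ Ioo (-1 + 2*δ) (1 - 2*δ) := by
    intro a b ha hb
    exact Icc_subset_Ioo ha.1 hb.2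
  have hfinal : 0 ≤ D ν := by
    rcases le_total 0 ν with hsgn | hsgn
    · -- D monotone on Icc 0 ν
      have hsub := hIsub 0 ν hI0 hν
      have hmono : MonotoneOn D (Icc 0 ν) := by
        apply monotoneOn_of_hasDerivWithinAt_nonneg (f' := fun x => k - 2*δ/(H x)) (convex_Icc 0 ν)
        · exact hcont.mono hsub
        · intro x hx
          exact ((hDderiv x (hsub (interior_subset hx))).hasDerivWithinAt).mono interior_subset
        · intro x hx
          rw [interior_Icc] at hx
          have hxI := hsub (Ioo_subset_Icc_self hx)
          have hge : H 0 ≤ H x := stmt9_H_mono hδ0 hδ1 hI0 hxI hx.1.le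
          have := div_le_div_of_nonneg_left (by linarith : (0:ℝ) ≤ 2*δ) (hHpos 0 hI0) hge
          simp only [hk]
          linarith
      have := hmono (left_mem_Icc.2 hsgn) (right_mem_Icc.2 hsgn) hsgn
      rw [hD0] at this; exact this
    · -- D antitone on Icc ν 0
      have hsub := hIsub ν 0 hν hI0
      have hanti : AntitoneOn D (Icc ν 0) := by
        apply antitoneOn_of_hasDerivWithinAt_nonpos (f' := fun x => k - 2*δ/(H x)) (convex_Icc ν 0)
        · exact hcont.mono hsub
        · intro x hx
          exact ((hDderiv x (hsub (interior_subset hx))).hasDerivWithinAt).mono interior_subset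
        · intro x hx
          rw [interior_Icc] at hx
          have hxI := hsub (Ioo_subset_Icc_self hx)
          have hge : H x ≤ H 0 := stmt9_H_mono hδ0 hδ1 hxI hI0 hx.2.le
          have := div_le_div_of_nonneg_left (by linarith : (0:ℝ) ≤ 2*δ) (hHpos x hxI) hge
          simp only [hk]
          linarith
      have := hanti (left_mem_Icc.2 hsgn) (right_mem_Icc.2 hsgn) hsgn
      rw [hD0] at this; exact this
  have : 1/(A ν) ≤ 1/(A 0) + k*ν := by
    simp only [hD] at hfinal
    linarith
  simpa [hA, hH, hk] using this

/-- **Example 1, maximum of `f`.** For `δ ∈ (0, 1/2)` and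
`f(ν) = 1/|log(1 - 2δ/(1+ν))| + 1/|log(1 - 2δ/(1-ν))|`, every `ν ∈ (-1+2δ, 1-2δ)`
satisfies `f(ν) ≤ f(0) = 2/|log(1-2δ)|`. -/
theorem stmt_9 (δ : ℝ) (hδ0 : 0 < δ) (hδ1 : δ < 1 / 2)
    (f : ℝ → ℝ)
    (hf : ∀ ν, f ν = 1 / (-Real.log (1 - 2 * δ / (1 + ν)))
        + 1 / (-Real.log (1 - 2 * δ / (1 - ν)))) :
    (∀ ν ∈ Set.Ioo (-1 + 2 * δ) (1 - 2 * δ), f ν ≤ f 0) ∧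
      f 0 = 2 / (-Real.log (1 - 2 * δ)) := by
  have hrw : ∀ ν : ℝ, 0 < 1 + ν - 2*δ → 0 < 1 + ν →
      -Real.log (1 - 2 * δ / (1 + ν)) = Real.log (1+ν) - Real.log (1+ν-2*δ) := by
    intro ν h2 h1
    have he : 1 - 2 * δ / (1 + ν) = (1+ν-2*δ)/(1+ν) := by
      field_simp
    rw [he, Real.log_div (ne_of_gt h2) (ne_of_gt h1)]
    ring
  have hf0 : f 0 = 2 / (-Real.log (1 - 2 * δ)) := by
    rw [hf]
    norm_num
    ring
  refine ⟨?_, hf0⟩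
  intro ν hν
  have h2 : 0 < 1 + ν - 2*δ := by linarith [hν.1]
  have h1 : 0 < 1 + ν := by linarith
  have h2' : 0 < 1 + (-ν) - 2*δ := by linarith [hν.2]
  have h1' : 0 < 1 + (-ν) := by linarith [hν.2]
  have hνI : ν ∈ Ioo (-1 + 2*δ) (1 - 2*δ) := hν
  have hνI' : (-ν) ∈ Ioo (-1 + 2*δ) (1 - 2*δ) := ⟨by linarith [hν.2], by linarith [hν.1]⟩
  have t1 := stmt9_tangent hδ0 hδ1 hνI
  have t2 := stmt9_tangent hδ0 hδ1 hνI'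
  have e1 := hrw ν h2 h1
  have e2 : -Real.log (1 - 2 * δ / (1 - ν)) = Real.log (1+(-ν)) - Real.log (1+(-ν)-2*δ) := by
    have := hrw (-ν) h2' h1'
    rw [← this]
    ring_nf
  rw [hf ν, e1, e2, hf0]
  have hc : Real.log 1 - Real.log (1-2*δ) = -Real.log (1-2*δ) := by simp
  rw [hc] at t1 t2
  have : 1 / (Real.log (1+ν) - Real.log (1+ν-2*δ))
      + 1 / (Real.log (1+(-ν)) - Real.log (1+(-ν)-2*δ))
      ≤ 2 / (-Real.log (1-2*δ)) := by
    have hsum := add_le_add t1 t2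
    have : (1:ℝ)/(-Real.log (1-2*δ))
        + (2*δ/((1+(0:ℝ))*(1+(0:ℝ)-2*δ)*(Real.log (1+(0:ℝ)) - Real.log (1+(0:ℝ)-2*δ))^2)) * ν
        + (1/(-Real.log (1-2*δ))
        + (2*δ/((1+(0:ℝ))*(1+(0:ℝ)-2*δ)*(Real.log (1+(0:ℝ)) - Real.log (1+(0:ℝ)-2*δ))^2)) * (-ν))
        = 2 / (-Real.log (1-2*δ)) := by ring
    linarith [this ▸ hsum]
  convert this using 2 <;> norm_num
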